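/- Let s₀ < b < +∞ and let h : [s₀, b) → ℝ be continuously differentiable with h(s) < 0 for all s, satisfying lim_{s → b⁻} h(s) = −∞. Let w : [s₀, b) → ℝ be a continuously differentiable solution of w'(s) = −(1 + w(s)²)·(1 − h(s)·w(s)). If there exist M > 0 and s₁ ∈ [s₀, b) such that w(s) ≥ M for every s ∈ [s₁, b), then there exists w₁ ≥ M with lim_{s → b⁻} w(s) = w₁, and lim_{s → b⁻} w'(s) = −∞. -/

import Mathlib

open Set Filter

/-- If `h ∈ C¹[s₀, b)` is negative, `b < +∞`, `h(s) → −∞` as `s → b⁻`,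
and `w` solves `w' = −(1 + w²)(1 − h w)` on `[s₀, b)` with `w ≥ M > 0` near `b`, then
`w` has a finite limit `w₁ ≥ M` at `b⁻` and `w' → −∞` at `b⁻`. -/
theorem bounded_below_solution_limit_negative_case
    (s₀ b : ℝ) (hs₀b : s₀ < b)
    (h : ℝ → ℝ)
    (hC1 : ContDiffOn ℝ 1 h (Set.Ico s₀ b))
    (hneg : ∀ s ∈ Set.Ico s₀ b, h s < 0)
    (hblow : Filter.Tendsto h (nhdsWithin b (Set.Iio b)) Filter.atBot)
    (w : ℝ → ℝ)
    (hwC1 : ContDiffOn ℝ 1 w (Set.Ico s₀ b))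
    (hode : ∀ s ∈ Set.Ico s₀ b,
      HasDerivWithinAt w (-((1 + w s ^ 2) * (1 - h s * w s))) (Set.Ico s₀ b) s)
    (M : ℝ) (hM : 0 < M) (s₁ : ℝ) (hs₁ : s₁ ∈ Set.Ico s₀ b)
    (hbound : ∀ s ∈ Set.Ico s₁ b, M ≤ w s) :
    (∃ w₁ : ℝ, M ≤ w₁ ∧ Filter.Tendsto w (nhdsWithin b (Set.Iio b)) (nhds w₁)) ∧
    Filter.Tendsto (fun s => -((1 + w s ^ 2) * (1 - h s * w s)))
      (nhdsWithin b (Set.Iio b)) Filter.atBot := by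
  have hs₁b : s₁ < b := hs₁.2
  have hs₀s₁ : s₀ ≤ s₁ := hs₁.1
  -- the derivative is negative on (s₁, b)
  have hderiv : ∀ x ∈ Set.Ioo s₁ b, deriv w x < 0 := by
    intro x hx
    have hx' : x ∈ Set.Ico s₀ b := ⟨hs₀s₁.trans hx.1.le, hx.2⟩
    have hmem : Set.Ico s₀ b ∈ nhds x :=
      mem_nhds_iff.2 ⟨Set.Ioo s₀ b, Set.Ioo_subset_Ico_self, isOpen_Ioo,
        ⟨lt_of_le_of_lt hs₀s₁ hx.1, hx.2⟩⟩
    have hd : HasDerivAt w (-((1 + w x ^ 2) * (1 - h x * w x))) x :=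
      (hode x hx').hasDerivAt hmem
    rw [hd.deriv]
    have hwx : M ≤ w x := hbound x ⟨hx.1.le, hx.2⟩
    have hhx : h x < 0 := hneg x hx'
    nlinarith [sq_nonneg (w x), mul_pos (neg_pos.mpr hhx) (lt_of_lt_of_le hM hwx)]
  -- w is antitone on Ico s₁ b
  have hanti : StrictAntiOn w (Set.Ico s₁ b) := by
    apply strictAntiOn_of_deriv_neg (convex_Ico s₁ b)
    · exact hwC1.continuousOn.mono (Set.Ico_subset_Ico_left hs₀s₁)
    · rw [interior_Ico]; exact hderiv
  have hne : (Set.Ioo s₁ b).Nonempty := Set.nonempty_Ioo.mpr hs₁b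
  have hantiIoo : AntitoneOn w (Set.Ioo s₁ b) :=
    (hanti.antitoneOn).mono Set.Ioo_subset_Ico_self
  have hbdd : BddBelow (w '' Set.Ioo s₁ b) := by
    refine ⟨M, fun y hy => ?_⟩
    rcases hy with ⟨x, hx, rfl⟩
    exact hbound x ⟨hx.1.le, hx.2⟩
  have htend : Filter.Tendsto w (nhdsWithin b (Set.Iio b))
      (nhds (sInf (w '' Set.Ioo s₁ b))) :=
    hantiIoo.tendsto_nhdsWithin_Ioo_left hne hbdd
  set w₁ := sInf (w '' Set.Ioo s₁ b) with hw₁def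
  have hw₁M : M ≤ w₁ := by
    apply le_csInf (hne.image w)
    rintro y ⟨x, hx, rfl⟩
    exact hbound x ⟨hx.1.le, hx.2⟩
  refine ⟨⟨w₁, hw₁M, htend⟩, ?_⟩
  -- w' → -∞
  have h1 : Filter.Tendsto (fun s => 1 + w s ^ 2) (nhdsWithin b (Set.Iio b))
      (nhds (1 + w₁ ^ 2)) := tendsto_const_nhds.add (htend.pow 2)
  have h2 : Filter.Tendsto (fun s => h s * w s) (nhdsWithin b (Set.Iio b)) Filter.atBot :=
    hblow.atBot_mul_pos (lt_of_lt_of_le hM hw₁M) htend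
  have h3 : Filter.Tendsto (fun s => 1 - h s * w s) (nhdsWithin b (Set.Iio b))
      Filter.atTop := by
    have := tendsto_neg_atBot_atTop.comp h2
    simpa [Function.comp_def, sub_eq_add_neg] using
      tendsto_atTop_add_const_left _ 1 this
  have h4 : Filter.Tendsto (fun s => (1 + w s ^ 2) * (1 - h s * w s))
      (nhdsWithin b (Set.Iio b)) Filter.atTop :=
    h1.pos_mul_atTop (by positivity) h3
  simpa [Function.comp_def] using tendsto_neg_atTop_atBot.comp h4
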